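/- Let n > m ≥ 1 and let F be an n×n real column-stochastic matrix, with indices partitioned into the 'wealthy' block W = {1,…,n−m} and the 'poor' block P = {n−m+1,…,n}. Suppose the lower-left block vanishes, i.e., F_{ij} = 0 for all i ∈ P and j ∈ W, the upper-right block is nonzero, i.e., F_{ij} > 0 for some i ∈ W and j ∈ P, and the lower-right block F₂₂ = (F_{ij})_{i,j ∈ P} is irreducible. Then for every x ∈ ℝⁿ and every i ∈ P, the i-th coordinate of F^k x converges to 0 as k → ∞; consequently, for nonnegative x, the total wealth of the wealthy block, ∑_{i ∈ W} (F^k x)_i, converges to ∑_{i=1}^n x_i. (The wealthy agents asymptotically end up with all the cash in the economy.) -/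

import Mathlib

open Matrix Finset Filter Topology

/-- A nonnegative square matrix is irreducible: every entry of some power is positive. -/
def MatrixIrreducible {m : Type*} [Fintype m] [DecidableEq m] (A : Matrix m m ℝ) : Prop :=
  ∀ i j, ∃ k : ℕ, 1 ≤ k ∧ 0 < (A ^ k) i j

lemma colsum_mul {m : ℕ} (M N : Matrix (Fin m) (Fin m) ℝ) (j : Fin m) :
    ∑ i, (M * N) i j = ∑ l, (∑ i, M i l) * N l j := by
  simp only [Matrix.mul_apply, Finset.sum_mul]
  rw [Finset.sum_comm]

lemma key_lemma {m : ℕ} (hm : 1 ≤ m) (D : Matrix (Fin m) (Fin m) ℝ)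
    (hD : ∀ i j, 0 ≤ D i j) (hcol : ∀ j, ∑ i, D i j ≤ 1)
    (j0 : Fin m) (hj0 : ∑ i, D i j0 < 1)
    (hirr : MatrixIrreducible D) (y : Fin m → ℝ) (i : Fin m) :
    Tendsto (fun k => (D ^ k).mulVec y i) atTop (nhds 0) := by
  have : Nonempty (Fin m) := ⟨⟨0, hm⟩⟩
  -- nonnegativity of powers
  have hpow : ∀ k i j, 0 ≤ (D ^ k) i j := by
    intro k
    induction k with
    | zero => intro i j; simp [Matrix.one_apply]; positivity
    | succ k ih =>
        intro i j
        rw [pow_succ, Matrix.mul_apply]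
        exact Finset.sum_nonneg fun l _ => mul_nonneg (ih i l) (hD l j)
  set c : ℕ → Fin m → ℝ := fun k j => ∑ i, (D ^ k) i j with hc
  have hcnonneg : ∀ k j, 0 ≤ c k j := fun k j =>
    Finset.sum_nonneg fun l _ => hpow k l j
  have hc0 : ∀ j, c 0 j = 1 := by
    intro j; simp [hc, Matrix.one_apply]
  have hrec : ∀ k j, c (k + 1) j = ∑ l, c 1 l * (D ^ k) l j := by
    intro k j
    have : D ^ (k + 1) = D ^ 1 * D ^ k := by rw [← pow_add]; ring_nf
    simp only [hc, this, colsum_mul]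
  have hmono : ∀ k j, c (k + 1) j ≤ c k j := by
    intro k j
    rw [hrec]
    calc ∑ l, c 1 l * (D ^ k) l j ≤ ∑ l, 1 * (D ^ k) l j := by
          apply Finset.sum_le_sum
          intro l _
          exact mul_le_mul_of_nonneg_right (by simpa [hc] using hcol l) (hpow k l j)
      _ = c k j := by simp [hc]
  have hanti : ∀ a b, a ≤ b → ∀ j, c b j ≤ c a j := by
    intro a b hab j
    induction b with
    | zero =>
        have : a = 0 := Nat.le_zero.mp hab
        simp [this]
    | succ b ih =>
        rcases Nat.lt_or_ge a (b+1) with h | h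
        · exact le_trans (hmono b j) (ih (Nat.lt_succ_iff.mp h))
        · have : a = b + 1 := le_antisymm hab h
          simp [this]
  have hle1 : ∀ k j, c k j ≤ 1 := fun k j => by
    simpa [hc0] using hanti 0 k (Nat.zero_le _) j
  -- for each l, there is k with c k l < 1
  have hstrict : ∀ l, ∃ k, c k l < 1 := by
    intro l
    obtain ⟨k, hk1, hkpos⟩ := hirr j0 l
    refine ⟨k + 1, ?_⟩
    rw [hrec]
    calc ∑ t, c 1 t * (D ^ k) t l < ∑ t, (D ^ k) t l := by
          apply Finset.sum_lt_sum
          · intro t _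
            nth_rewrite 2 [show (D^k) t l = 1 * (D^k) t l by ring]
            exact mul_le_mul_of_nonneg_right (hle1 1 t) (hpow k t l)
          · refine ⟨j0, Finset.mem_univ _, ?_⟩
            nth_rewrite 2 [show (D^k) j0 l = 1 * (D^k) j0 l by ring]
            apply mul_lt_mul_of_pos_right _ hkpos
            simpa [hc] using hj0
      _ = c k l := rfl
      _ ≤ 1 := hle1 k l
  choose Nl hNl using hstrict
  set N : ℕ := Finset.univ.sup Nl with hN
  have hNle : ∀ l, Nl l ≤ N := fun l => Finset.le_sup (Finset.mem_univ l)
  have hcN : ∀ l, c N l < 1 := fun l => lt_of_le_of_lt (hanti _ _ (hNle l) l) (hNl l)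
  set θ : ℝ := Finset.univ.sup' Finset.univ_nonempty (fun l => c N l) with hθ
  have hθlt : θ < 1 := by
    rw [hθ, Finset.sup'_lt_iff]
    exact fun l _ => hcN l
  have hθ0 : 0 ≤ θ := le_trans (hcnonneg N (Classical.arbitrary _))
    (Finset.le_sup' _ (Finset.mem_univ _))
  have hcθ : ∀ l, c N l ≤ θ := fun l => Finset.le_sup' _ (Finset.mem_univ l)
  -- geometric decay along multiples of N
  have hgeo : ∀ k j, c (N * k) j ≤ θ ^ k := by
    intro k
    induction k with
    | zero => intro j; simp [hc0]
    | succ k ih =>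
        intro j
        have hsplit : D ^ (N * (k + 1)) = D ^ N * D ^ (N * k) := by
          rw [← pow_add]; ring_nf
        have : c (N * (k + 1)) j = ∑ l, c N l * (D ^ (N * k)) l j := by
          simp only [hc, hsplit, colsum_mul]
        rw [this, pow_succ']
        calc ∑ l, c N l * (D ^ (N * k)) l j ≤ ∑ l, θ * (D ^ (N * k)) l j := by
              apply Finset.sum_le_sum
              intro l _
              exact mul_le_mul_of_nonneg_right (hcθ l) (hpow _ l j)
          _ = θ * c (N * k) j := by rw [← Finset.mul_sum]
          _ ≤ θ * θ ^ k := mul_le_mul_of_nonneg_left (ih j) hθ0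
  have hN1 : 1 ≤ N := by
    have l0 : Fin m := Classical.arbitrary _
    have : Nl l0 ≠ 0 := by
      intro h
      have := hNl l0
      rw [h, hc0] at this
      exact lt_irrefl _ this
    exact le_trans (Nat.one_le_iff_ne_zero.mpr this) (hNle l0)
  -- general decay
  have hdecay : ∀ k j, c k j ≤ θ ^ (k / N) := by
    intro k j
    have h1 : N * (k / N) ≤ k := Nat.mul_div_le k N
    exact le_trans (hanti _ _ h1 j) (hgeo (k / N) j)
  -- bound the mulVec entry
  set S : ℝ := ∑ l, |y l| with hS
  have hbound : ∀ k, ‖(D ^ k).mulVec y i‖ ≤ θ ^ (k / N) * S := by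
    intro k
    rw [Real.norm_eq_abs, Matrix.mulVec, dotProduct]
    calc |∑ l, (D ^ k) i l * y l| ≤ ∑ l, |(D ^ k) i l * y l| :=
          Finset.abs_sum_le_sum_abs _ _
      _ ≤ ∑ l, θ ^ (k / N) * |y l| := by
          apply Finset.sum_le_sum
          intro l _
          rw [abs_mul, abs_of_nonneg (hpow k i l)]
          apply mul_le_mul_of_nonneg_right _ (abs_nonneg _)
          calc (D ^ k) i l ≤ c k l :=
                Finset.single_le_sum (fun t _ => hpow k t l) (Finset.mem_univ i)
            _ ≤ θ ^ (k / N) := hdecay k l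
      _ = θ ^ (k / N) * S := by rw [hS, Finset.mul_sum]
  -- conclude via squeeze
  have hdiv : Tendsto (fun k : ℕ => k / N) atTop atTop := by
    apply Filter.tendsto_atTop_atTop.mpr
    intro b
    exact ⟨N * b, fun a ha => (Nat.le_div_iff_mul_le (Nat.lt_of_lt_of_le Nat.zero_lt_one hN1)).mpr (by rw [Nat.mul_comm]; exact ha)⟩
  have hgeo0 : Tendsto (fun k : ℕ => θ ^ (k / N) * S) atTop (nhds 0) := by
    have h1 : Tendsto (fun k : ℕ => θ ^ k) atTop (nhds 0) :=
      tendsto_pow_atTop_nhds_zero_of_lt_one hθ0 hθlt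
    have := (h1.comp hdiv).mul_const S
    simpa using this
  exact squeeze_zero_norm hbound hgeo0

lemma pow_blocks {p m : ℕ} (F : Matrix (Fin p ⊕ Fin m) (Fin p ⊕ Fin m) ℝ)
    (hF21 : ∀ (i : Fin m) (j : Fin p), F (Sum.inr i) (Sum.inl j) = 0) (k : ℕ) :
    (∀ i j, (F ^ k) (Sum.inr i) (Sum.inl j) = 0) ∧
      (∀ i j, (F ^ k) (Sum.inr i) (Sum.inr j) = (F.toBlocks₂₂ ^ k) i j) := by
  induction k with
  | zero => simp [Matrix.one_apply]
  | succ k ih =>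
      obtain ⟨ih1, ih2⟩ := ih
      constructor
      · intro i j
        rw [pow_succ, Matrix.mul_apply, Fintype.sum_sum_type]
        have h1 : ∀ a : Fin p, (F ^ k) (Sum.inr i) (Sum.inl a) * F (Sum.inl a) (Sum.inl j)
            = 0 := fun a => by rw [ih1]; ring
        have h2 : ∀ b : Fin m, (F ^ k) (Sum.inr i) (Sum.inr b) * F (Sum.inr b) (Sum.inl j)
            = 0 := fun b => by rw [hF21]; ring
        simp [h1, h2]
      · intro i j
        rw [pow_succ, pow_succ, Matrix.mul_apply, Matrix.mul_apply, Fintype.sum_sum_type]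
        have h1 : ∀ a : Fin p, (F ^ k) (Sum.inr i) (Sum.inl a) * F (Sum.inl a) (Sum.inr j)
            = 0 := fun a => by rw [ih1]; ring
        simp only [h1, Finset.sum_const_zero, zero_add]
        apply Finset.sum_congr rfl
        intro b _
        rw [ih2]
        rfl


/-- The second class-struggle asymptotic in a fragmented society. The
poor block `P` (indexed by `Fin m`) buys from the wealthy block `W` (indexed by
`Fin p`, `p = n - m`), i.e. `F₁₂ ≠ 0`, but the wealthy do not hire the poor at all
(`F₂₁ = 0`); if the poor sub-economy `F₂₂` is irreducible, then every poor coordinate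
of `F^k x` tends to `0`, and for nonnegative `x` the total wealth of the wealthy block
tends to the whole monetary base `∑ i, x i`. -/
theorem wealthy_absorb_all_wealth (p m : ℕ) (hp : 1 ≤ p) (hm : 1 ≤ m)
    (F : Matrix (Fin p ⊕ Fin m) (Fin p ⊕ Fin m) ℝ)
    (hF : ∀ i j, 0 ≤ F i j) (hcol : ∀ j, ∑ i, F i j = 1)
    (hF21 : ∀ (i : Fin m) (j : Fin p), F (Sum.inr i) (Sum.inl j) = 0)
    (hF12 : ∃ (i : Fin p) (j : Fin m), 0 < F (Sum.inl i) (Sum.inr j))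
    (hirr : MatrixIrreducible (F.toBlocks₂₂)) :
    (∀ (x : Fin p ⊕ Fin m → ℝ) (i : Fin m),
        Filter.Tendsto (fun k : ℕ => (F ^ k).mulVec x (Sum.inr i))
          Filter.atTop (nhds 0)) ∧
      ∀ x : Fin p ⊕ Fin m → ℝ, (∀ i, 0 ≤ x i) →
        Filter.Tendsto (fun k : ℕ => ∑ i : Fin p, (F ^ k).mulVec x (Sum.inl i))
          Filter.atTop (nhds (∑ i, x i)) := by
  set D := F.toBlocks₂₂ with hD
  have hDapp : ∀ i j, D i j = F (Sum.inr i) (Sum.inr j) := fun i j => rfl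
  have hDnn : ∀ i j, 0 ≤ D i j := fun i j => hF _ _
  have hDcol : ∀ j, ∑ i, D i j ≤ 1 := by
    intro j
    have h := hcol (Sum.inr j)
    rw [Fintype.sum_sum_type] at h
    have hnn : 0 ≤ ∑ a : Fin p, F (Sum.inl a) (Sum.inr j) :=
      Finset.sum_nonneg fun a _ => hF _ _
    simp only [hDapp]
    linarith
  obtain ⟨i0, j0, hij0⟩ := hF12
  have hDj0 : ∑ i, D i j0 < 1 := by
    have h := hcol (Sum.inr j0)
    rw [Fintype.sum_sum_type] at h
    have hpos : 0 < ∑ a : Fin p, F (Sum.inl a) (Sum.inr j0) :=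
      Finset.sum_pos' (fun a _ => hF _ _) ⟨i0, Finset.mem_univ _, hij0⟩
    simp only [hDapp]
    linarith
  -- reduce poor coordinates to D-powers
  have hmv : ∀ (x : Fin p ⊕ Fin m → ℝ) (k : ℕ) (i : Fin m),
      (F ^ k).mulVec x (Sum.inr i) = (D ^ k).mulVec (fun j => x (Sum.inr j)) i := by
    intro x k i
    obtain ⟨h1, h2⟩ := pow_blocks F hF21 k
    rw [Matrix.mulVec, dotProduct, Fintype.sum_sum_type,
      Matrix.mulVec, dotProduct]
    simp only [h1, h2, zero_mul, Finset.sum_const_zero, zero_add]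
    rfl
  have part1 : ∀ (x : Fin p ⊕ Fin m → ℝ) (i : Fin m),
      Filter.Tendsto (fun k : ℕ => (F ^ k).mulVec x (Sum.inr i))
        Filter.atTop (nhds 0) := by
    intro x i
    simp only [hmv x]
    exact key_lemma hm D hDnn hDcol j0 hDj0 hirr _ i
  refine ⟨part1, ?_⟩
  intro x hx
  -- total wealth preserved
  have hcs : ∀ y : Fin p ⊕ Fin m → ℝ, ∑ i, F.mulVec y i = ∑ j, y j := by
    intro y
    simp only [Matrix.mulVec, dotProduct]
    rw [Finset.sum_comm]
    apply Finset.sum_congr rfl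
    intro j _
    rw [← Finset.sum_mul, hcol, one_mul]
  have htot : ∀ k : ℕ, ∑ i, (F ^ k).mulVec x i = ∑ i, x i := by
    intro k
    induction k with
    | zero => simp
    | succ k ih =>
        rw [pow_succ', ← Matrix.mulVec_mulVec, hcs, ih]
  have hsplit : ∀ k : ℕ, ∑ i : Fin p, (F ^ k).mulVec x (Sum.inl i)
      = (∑ i, x i) - ∑ i : Fin m, (F ^ k).mulVec x (Sum.inr i) := by
    intro k
    have h := htot k
    rw [Fintype.sum_sum_type] at h
    linarith
  have hpoor : Tendsto (fun k : ℕ => ∑ i : Fin m, (F ^ k).mulVec x (Sum.inr i))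
      atTop (nhds 0) := by
    have := tendsto_finset_sum (Finset.univ : Finset (Fin m))
      (fun i _ => part1 x i)
    simpa using this
  have := (tendsto_const_nhds (x := ∑ i, x i) (f := atTop (α := ℕ))).sub hpoor
  rw [sub_zero] at this
  simpa only [hsplit] using this
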